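/- Let A = [[A₁₁, A₁₂],[0, A₂₂]] ∈ ℂ^{m×m} and B = [[B₁₁, B₁₂],[0, B₂₂]] ∈ ℂ^{n×n} be block upper triangular with square diagonal blocks, let V satisfy A₁₁V − VA₂₂ = A₁₂ and W satisfy B₁₁W − WB₂₂ = B₁₂, and let C = [[C₁₁, C₁₂],[C₂₁, C₂₂]] ∈ ℂ^{m×n} be partitioned conformally. Write L₁(x) = (xI − A₁₁)⁻¹, L₂(x) = (xI − A₂₂)⁻¹, R₁(y) = (yI − B₁₁)⁻¹, R₂(y) = (yI − B₂₂)⁻¹. Then for every x ∈ ℂ outside the spectra of A₁₁ and A₂₂ and every y ∈ ℂ outside the spectra of B₁₁ and B₂₂: (xI − A)⁻¹ C (yI − B)⁻¹ = [I;0]·L₁(x)(C₁₁ + VC₂₁)R₁(y)·[I, W] + [−V;I]·L₂(x)C₂₁R₁(y)·[I, W] + [I;0]·L₁(x)([I, V]·C·[−W;I])R₂(y)·[0, I] + [−V;I]·L₂(x)(C₂₂ − C₂₁W)R₂(y)·[0, I]. -/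

import Mathlib

open Matrix

private lemma isUnit_resolvent {n : ℕ} {x : ℂ} {M : Matrix (Fin n) (Fin n) ℂ}
    (h : x ∉ spectrum ℂ M) : IsUnit (x • (1 : Matrix (Fin n) (Fin n) ℂ) - M) := by
  have := spectrum.notMem_iff.mp h
  rwa [Algebra.algebraMap_eq_smul_one] at this

private lemma block_resolvent {p q : ℕ} {x : ℂ}
    (M₁₁ : Matrix (Fin p) (Fin p) ℂ) (M₁₂ : Matrix (Fin p) (Fin q) ℂ)
    (M₂₂ : Matrix (Fin q) (Fin q) ℂ) (V : Matrix (Fin p) (Fin q) ℂ)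
    (hV : M₁₁ * V - V * M₂₂ = M₁₂)
    (h1 : IsUnit (x • (1 : Matrix (Fin p) (Fin p) ℂ) - M₁₁))
    (h2 : IsUnit (x • (1 : Matrix (Fin q) (Fin q) ℂ) - M₂₂)) :
    (x • 1 - fromBlocks M₁₁ M₁₂ 0 M₂₂)⁻¹ =
      fromBlocks (x • 1 - M₁₁)⁻¹
        ((x • 1 - M₁₁)⁻¹ * V - V * (x • 1 - M₂₂)⁻¹) 0 (x • 1 - M₂₂)⁻¹ := by
  apply inv_eq_right_inv
  have e1 : (x • 1 - M₁₁) * (x • 1 - M₁₁)⁻¹ = 1 :=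
    mul_nonsing_inv _ ((Matrix.isUnit_iff_isUnit_det _).mp h1)
  have e2 : (x • 1 - M₂₂) * (x • 1 - M₂₂)⁻¹ = 1 :=
    mul_nonsing_inv _ ((Matrix.isUnit_iff_isUnit_det _).mp h2)
  have key : (x • 1 - M₁₁) * V + M₁₂ = V * (x • 1 - M₂₂) := by
    rw [← hV, Matrix.sub_mul, Matrix.mul_sub, Matrix.smul_mul, Matrix.mul_smul,
      Matrix.one_mul, Matrix.mul_one]
    try abel
  have hxblock : (x • 1 : Matrix (Fin p ⊕ Fin q) (Fin p ⊕ Fin q) ℂ) =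
      fromBlocks (x • 1) 0 0 (x • 1) := by
    ext (i | i) (j | j) <;> simp [Matrix.one_apply]
  have hsub : fromBlocks (x • (1 : Matrix (Fin p) (Fin p) ℂ)) 0 0
        (x • (1 : Matrix (Fin q) (Fin q) ℂ)) - fromBlocks M₁₁ M₁₂ 0 M₂₂ =
      fromBlocks (x • 1 - M₁₁) (0 - M₁₂) (0 - 0) (x • 1 - M₂₂) := by
    rw [sub_eq_add_neg, fromBlocks_neg, fromBlocks_add]
    simp [sub_eq_add_neg]
  rw [hxblock, hsub, fromBlocks_multiply, ← fromBlocks_one]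
  rw [fromBlocks_inj]
  refine ⟨by simpa using e1, ?_, by simp, by simpa using e2⟩
  have h3 : (x • 1 - M₁₁) * ((x • 1 - M₁₁)⁻¹ * V) = V := by
    rw [← Matrix.mul_assoc, e1, Matrix.one_mul]
  have h4 : (x • 1 - M₁₁) * (V * (x • 1 - M₂₂)⁻¹) + M₁₂ * (x • 1 - M₂₂)⁻¹ = V := by
    rw [← Matrix.mul_assoc, ← Matrix.add_mul, key, Matrix.mul_assoc, e2, Matrix.mul_one]
  rw [Matrix.mul_sub, zero_sub, Matrix.neg_mul, h3, ← sub_eq_add_neg, sub_sub, h4, sub_self]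

/-- For block upper triangular `A`, `B`, a conformally partitioned `C`, and Sylvester
solutions `V`, `W`, the product of resolvents `(xI − A)⁻¹ C (yI − B)⁻¹` splits into four
terms, one for each pair of diagonal blocks. -/
theorem resolvent_product_splitting (p q r s : ℕ)
    (A₁₁ : Matrix (Fin p) (Fin p) ℂ) (A₁₂ : Matrix (Fin p) (Fin q) ℂ)
    (A₂₂ : Matrix (Fin q) (Fin q) ℂ)
    (B₁₁ : Matrix (Fin r) (Fin r) ℂ) (B₁₂ : Matrix (Fin r) (Fin s) ℂ)
    (B₂₂ : Matrix (Fin s) (Fin s) ℂ)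
    (C₁₁ : Matrix (Fin p) (Fin r) ℂ) (C₁₂ : Matrix (Fin p) (Fin s) ℂ)
    (C₂₁ : Matrix (Fin q) (Fin r) ℂ) (C₂₂ : Matrix (Fin q) (Fin s) ℂ)
    (V : Matrix (Fin p) (Fin q) ℂ) (W : Matrix (Fin r) (Fin s) ℂ)
    (hV : A₁₁ * V - V * A₂₂ = A₁₂) (hW : B₁₁ * W - W * B₂₂ = B₁₂)
    (x y : ℂ)
    (hx₁ : x ∉ spectrum ℂ A₁₁) (hx₂ : x ∉ spectrum ℂ A₂₂)
    (hy₁ : y ∉ spectrum ℂ B₁₁) (hy₂ : y ∉ spectrum ℂ B₂₂) :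
    (x • 1 - fromBlocks A₁₁ A₁₂ 0 A₂₂)⁻¹ * fromBlocks C₁₁ C₁₂ C₂₁ C₂₂ *
        (y • 1 - fromBlocks B₁₁ B₁₂ 0 B₂₂)⁻¹ =
      (fromRows 1 0 : Matrix (Fin p ⊕ Fin q) (Fin p) ℂ) *
          ((x • 1 - A₁₁)⁻¹ * (C₁₁ + V * C₂₁) * (y • 1 - B₁₁)⁻¹) * fromCols 1 W
      + fromRows (-V) 1 *
          ((x • 1 - A₂₂)⁻¹ * C₂₁ * (y • 1 - B₁₁)⁻¹) * fromCols 1 W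
      + (fromRows 1 0 : Matrix (Fin p ⊕ Fin q) (Fin p) ℂ) *
          ((x • 1 - A₁₁)⁻¹ *
            ((fromCols 1 V : Matrix (Fin p) (Fin p ⊕ Fin q) ℂ) *
              fromBlocks C₁₁ C₁₂ C₂₁ C₂₂ *
              (fromRows (-W) 1 : Matrix (Fin r ⊕ Fin s) (Fin s) ℂ)) *
            (y • 1 - B₂₂)⁻¹) * fromCols 0 1
      + fromRows (-V) 1 *
          ((x • 1 - A₂₂)⁻¹ * (C₂₂ - C₂₁ * W) * (y • 1 - B₂₂)⁻¹) * fromCols 0 1 := by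
  rw [block_resolvent A₁₁ A₁₂ A₂₂ V hV (isUnit_resolvent hx₁) (isUnit_resolvent hx₂),
    block_resolvent B₁₁ B₁₂ B₂₂ W hW (isUnit_resolvent hy₁) (isUnit_resolvent hy₂)]
  rw [fromCols_mul_fromBlocks, fromCols_mul_fromRows]
  simp only [fromRows_mul, mul_fromCols, fromRows_fromCols_eq_fromBlocks,
    fromCols_fromRows_eq_fromBlocks, fromBlocks_multiply]
  erw [fromRows_mul_fromCols, fromRows_mul_fromCols]
  simp only [fromBlocks_add]
  rw [fromBlocks_inj]
  refine ⟨?_, ?_, ?_, ?_⟩ <;>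
  · simp only [Matrix.mul_add, Matrix.add_mul, Matrix.mul_sub, Matrix.sub_mul,
      Matrix.mul_assoc, Matrix.one_mul, Matrix.mul_one, Matrix.zero_mul, Matrix.mul_zero,
      Matrix.neg_mul, Matrix.mul_neg, add_zero, zero_add, sub_zero, zero_sub, neg_neg]
    try abel
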